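/- Let σ_x = [[0,1],[1,0]], σ_z = [[1,0],[0,−1]], σ_+ = [[0,1],[0,0]], σ_− = [[0,0],[1,0]]. Consider the solution ρ : ℝ → M_2(ℂ) of the master equation dρ/dt = sin(2t)(σ_x ρ σ_x − ρ) + (σ_− ρ σ_+ − ½(σ_+σ_− ρ + ρ σ_+σ_−)) with initial condition ρ(0) = ½·I (the maximally mixed state). Then ρ(π) = ½(I − κ σ_z) with κ = e^{1−π} ∫_0^π e^{s − cos(2s)} ds, and κ > 1; consequently ρ(π) is not positive semidefinite, so the dynamics generated by the sum of these two generators is not physical. -/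

import Mathlib

open Matrix intervalIntegral
open scoped ComplexOrder

attribute [local instance] Matrix.normedAddCommGroup Matrix.normedSpace

noncomputable def sigmaX : Matrix (Fin 2) (Fin 2) ℂ := !![0, 1; 1, 0]
noncomputable def sigmaZ : Matrix (Fin 2) (Fin 2) ℂ := !![1, 0; 0, -1]
noncomputable def sigmaP : Matrix (Fin 2) (Fin 2) ℂ := !![0, 1; 0, 0]
noncomputable def sigmaM : Matrix (Fin 2) (Fin 2) ℂ := !![0, 0; 1, 0]

/-- The constant `κ = e^{1-π} ∫_0^π e^{s - cos(2s)} ds`. -/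
noncomputable def kappa13 : ℝ :=
  Real.exp (1 - Real.pi) * ∫ s in (0:ℝ)..Real.pi, Real.exp (s - Real.cos (2 * s))

/- ## auxiliary lemmas -/

noncomputable def gen13 (s : ℂ) (M : Matrix (Fin 2) (Fin 2) ℂ) : Matrix (Fin 2) (Fin 2) ℂ :=
  s • (sigmaX * M * sigmaX - M) +
        (sigmaM * M * sigmaP - (2:ℂ)⁻¹ • (sigmaP * sigmaM * M + M * (sigmaP * sigmaM)))

lemma g00 (M : Matrix (Fin 2) (Fin 2) ℂ) (s : ℂ) : gen13 s M 0 0 = s*(M 1 1 - M 0 0) - M 0 0 := by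
  simp [gen13, sigmaX, sigmaP, sigmaM, Matrix.mul_apply, Matrix.vecMul, dotProduct,
    Fin.sum_univ_two, Matrix.vecHead, Matrix.vecTail] <;> ring
lemma g11 (M : Matrix (Fin 2) (Fin 2) ℂ) (s : ℂ) : gen13 s M 1 1 = s*(M 0 0 - M 1 1) + M 0 0 := by
  simp [gen13, sigmaX, sigmaP, sigmaM, Matrix.mul_apply, Matrix.vecMul, dotProduct,
    Fin.sum_univ_two, Matrix.vecHead, Matrix.vecTail] <;> ring
lemma g01 (M : Matrix (Fin 2) (Fin 2) ℂ) (s : ℂ) : gen13 s M 0 1 = s*(M 1 0 - M 0 1) - (2:ℂ)⁻¹ * M 0 1 := by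
  simp [gen13, sigmaX, sigmaP, sigmaM, Matrix.mul_apply, Matrix.vecMul, dotProduct,
    Fin.sum_univ_two, Matrix.vecHead, Matrix.vecTail] <;> ring
lemma g10 (M : Matrix (Fin 2) (Fin 2) ℂ) (s : ℂ) : gen13 s M 1 0 = s*(M 0 1 - M 1 0) - (2:ℂ)⁻¹ * M 1 0 := by
  simp [gen13, sigmaX, sigmaP, sigmaM, Matrix.mul_apply, Matrix.vecMul, dotProduct,
    Fin.sum_univ_two, Matrix.vecHead, Matrix.vecTail] <;> ring

lemma expC_hasDerivAt {f : ℝ → ℝ} {f' : ℝ → ℝ} (hf : ∀ t, HasDerivAt f (f' t) t) (t : ℝ) :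
    HasDerivAt (fun t => Complex.exp ((f t : ℝ) : ℂ)) ((f' t : ℂ) * Complex.exp ((f t : ℝ) : ℂ)) t := by
  simpa [mul_comm] using (hf t).ofReal_comp.cexp

lemma phi_hasDerivAt (t : ℝ) :
    HasDerivAt (fun t : ℝ => t + 1 - Real.cos (2 * t)) (1 + 2 * Real.sin (2 * t)) t := by
  have h1 : HasDerivAt (fun t : ℝ => Real.cos (2 * t)) (-Real.sin (2 * t) * 2) t :=
    (Real.hasDerivAt_cos (2 * t)).comp t (by simpa using (hasDerivAt_id t).const_mul 2)
  have h2 : HasDerivAt (fun t : ℝ => t + 1) 1 t := (hasDerivAt_id t).add_const 1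
  exact (h2.sub h1).congr_deriv (by ring)

lemma psi_hasDerivAt (t : ℝ) :
    HasDerivAt (fun t : ℝ => t / 2 - Real.cos (2 * t)) (1 / 2 + 2 * Real.sin (2 * t)) t := by
  have h1 : HasDerivAt (fun t : ℝ => Real.cos (2 * t)) (-Real.sin (2 * t) * 2) t :=
    (Real.hasDerivAt_cos (2 * t)).comp t (by simpa using (hasDerivAt_id t).const_mul 2)
  have h2 : HasDerivAt (fun t : ℝ => t / 2) (1 / 2) t := by
    simpa using (hasDerivAt_id t).div_const 2
  exact (h2.sub h1).congr_deriv (by ring)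

lemma half_hasDerivAt (t : ℝ) : HasDerivAt (fun t : ℝ => t / 2) (1 / 2) t := by
  simpa using (hasDerivAt_id t).div_const 2

lemma const_of_deriv0 {g : ℝ → ℂ} (hg : ∀ t, HasDerivAt g 0 t) (t : ℝ) : g t = g 0 :=
  is_const_of_deriv_eq_zero (fun x => (hg x).differentiableAt) (fun x => (hg x).deriv) t 0

lemma integrable_f13 (a b : ℝ) :
    IntervalIntegrable (fun s => Real.exp (s - Real.cos (2*s))) MeasureTheory.volume a b :=
  (Real.continuous_exp.comp (by continuity)).intervalIntegrable a b

lemma kappa13_gt_one : 1 < kappa13 := by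
  have hpi := Real.pi_gt_three
  have h1 : ∫ s in (Real.pi/4)..(3*Real.pi/4), Real.exp s ≤
      ∫ s in (Real.pi/4)..(3*Real.pi/4), Real.exp (s - Real.cos (2*s)) := by
    apply integral_mono_on (by linarith) ((Real.continuous_exp).intervalIntegrable _ _) (integrable_f13 _ _)
    intro x hx
    have hc : Real.cos (2*x) ≤ 0 := by
      apply Real.cos_nonpos_of_pi_div_two_le_of_le <;> [linarith [hx.1]; linarith [hx.2]]
    exact Real.exp_le_exp.2 (by linarith)
  have h2 : ∫ s in (3*Real.pi/4)..Real.pi, Real.exp (s - 1) ≤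
      ∫ s in (3*Real.pi/4)..Real.pi, Real.exp (s - Real.cos (2*s)) := by
    apply integral_mono_on (by linarith) ((Real.continuous_exp.comp (by continuity)).intervalIntegrable _ _) (integrable_f13 _ _)
    intro x hx
    show Real.exp (x - 1) ≤ _
    exact Real.exp_le_exp.2 (by nlinarith [Real.cos_le_one (2*x)])
  have h0 : (0:ℝ) ≤ ∫ s in (0:ℝ)..(Real.pi/4), Real.exp (s - Real.cos (2*s)) := by
    apply integral_nonneg (by linarith)
    intro x _; positivity
  have hsplit : ∫ s in (0:ℝ)..Real.pi, Real.exp (s - Real.cos (2 * s)) =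
      (∫ s in (0:ℝ)..(Real.pi/4), Real.exp (s - Real.cos (2*s))) +
      (∫ s in (Real.pi/4)..(3*Real.pi/4), Real.exp (s - Real.cos (2*s))) +
      (∫ s in (3*Real.pi/4)..Real.pi, Real.exp (s - Real.cos (2*s))) := by
    rw [integral_add_adjacent_intervals (integrable_f13 _ _) (integrable_f13 _ _),
      integral_add_adjacent_intervals (integrable_f13 _ _) (integrable_f13 _ _)]
  have e1 : ∫ s in (Real.pi/4)..(3*Real.pi/4), Real.exp s
      = Real.exp (3*Real.pi/4) - Real.exp (Real.pi/4) := integral_exp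
  have e2 : ∫ s in (3*Real.pi/4)..Real.pi, Real.exp (s - 1)
      = Real.exp (Real.pi - 1) - Real.exp (3*Real.pi/4 - 1) := by
    rw [show (fun s : ℝ => Real.exp (s-1)) = fun s => Real.exp (s - 1) from rfl,
      integral_comp_sub_right Real.exp 1, integral_exp]
  have key : Real.exp (Real.pi - 1) < (Real.exp (3*Real.pi/4) - Real.exp (Real.pi/4)) +
      (Real.exp (Real.pi - 1) - Real.exp (3*Real.pi/4 - 1)) := by
    have h3 : Real.exp (3*Real.pi/4 - 1) + Real.exp (Real.pi/4) < Real.exp (3*Real.pi/4) := by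
      have ha : Real.exp (3*Real.pi/4 - 1) = Real.exp (3*Real.pi/4) * Real.exp (-1) := by
        rw [← Real.exp_add]; ring_nf
      have hb : Real.exp (Real.pi/4) = Real.exp (3*Real.pi/4) * Real.exp (-(Real.pi/2)) := by
        rw [← Real.exp_add]; ring_nf
      have hc : Real.exp (-1 : ℝ) < 1/2 := by
        rw [Real.exp_neg]
        rw [inv_lt_comm₀ (Real.exp_pos 1) (by norm_num)]
        calc (1/2 : ℝ)⁻¹ = 2 := by norm_num
        _ < Real.exp 1 := by linarith [Real.exp_one_gt_d9]
      have hd : Real.exp (-(Real.pi/2) : ℝ) < 1/2 := by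
        have : Real.exp (-(Real.pi/2)) < Real.exp (-1) :=
          Real.exp_lt_exp.2 (by linarith)
        linarith
      nlinarith [Real.exp_pos (3*Real.pi/4)]
    linarith
  have hI : Real.exp (Real.pi - 1) < ∫ s in (0:ℝ)..Real.pi, Real.exp (s - Real.cos (2 * s)) := by
    rw [hsplit]; linarith
  have heq : Real.exp (1 - Real.pi) * Real.exp (Real.pi - 1) = 1 := by
    rw [← Real.exp_add]; ring_nf; exact Real.exp_zero
  rw [kappa13]
  calc (1:ℝ) = Real.exp (1 - Real.pi) * Real.exp (Real.pi - 1) := heq.symm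
    _ < _ := mul_lt_mul_of_pos_left hI (Real.exp_pos _)

theorem stmt_13 (ρ : ℝ → Matrix (Fin 2) (Fin 2) ℂ)
    (hρ0 : ρ 0 = (2:ℂ)⁻¹ • (1 : Matrix (Fin 2) (Fin 2) ℂ))
    (hode : ∀ t : ℝ, HasDerivAt ρ
      (((Real.sin (2 * t) : ℂ)) • (sigmaX * ρ t * sigmaX - ρ t) +
        (sigmaM * ρ t * sigmaP -
          (2:ℂ)⁻¹ • (sigmaP * sigmaM * ρ t + ρ t * (sigmaP * sigmaM)))) t) :
    ρ Real.pi = (2:ℂ)⁻¹ •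
        ((1 : Matrix (Fin 2) (Fin 2) ℂ) - (kappa13 : ℂ) • sigmaZ) ∧
    1 < kappa13 ∧
    ¬ (ρ Real.pi).PosSemidef := by
  -- scalar entry functions
  set a : ℝ → ℂ := fun t => ρ t 0 0 with ha_def
  set d : ℝ → ℂ := fun t => ρ t 1 1 with hd_def
  set b : ℝ → ℂ := fun t => ρ t 0 1 with hb_def
  set c : ℝ → ℂ := fun t => ρ t 1 0 with hc_def
  set sC : ℝ → ℂ := fun t => ((Real.sin (2*t) : ℝ) : ℂ) with hsC_def
  have hgen : ∀ t, HasDerivAt ρ (gen13 (sC t) (ρ t)) t := fun t => hode t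
  have entry : ∀ (t : ℝ) (i j : Fin 2),
      HasDerivAt (fun t => ρ t i j) (gen13 (sC t) (ρ t) i j) t := fun t i j =>
    (hasDerivAt_pi.mp ((hasDerivAt_pi.mp (hgen t)) i)) j
  have ha : ∀ t, HasDerivAt a (sC t * (d t - a t) - a t) t := fun t => by
    have h := entry t 0 0; rwa [g00] at h
  have hd : ∀ t, HasDerivAt d (sC t * (a t - d t) + a t) t := fun t => by
    have h := entry t 1 1; rwa [g11] at h
  have hb : ∀ t, HasDerivAt b (sC t * (c t - b t) - (2:ℂ)⁻¹ * b t) t := fun t => by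
    have h := entry t 0 1; rwa [g01] at h
  have hc : ∀ t, HasDerivAt c (sC t * (b t - c t) - (2:ℂ)⁻¹ * c t) t := fun t => by
    have h := entry t 1 0; rwa [g10] at h
  -- initial values
  have ha0 : a 0 = 2⁻¹ := by simp [ha_def, hρ0, Matrix.one_apply]
  have hd0 : d 0 = 2⁻¹ := by simp [hd_def, hρ0, Matrix.one_apply]
  have hb0 : b 0 = 0 := by simp [hb_def, hρ0, Matrix.one_apply]
  have hc0 : c 0 = 0 := by simp [hc_def, hρ0, Matrix.one_apply]
  -- trace is constant
  have hT : ∀ t, a t + d t = 1 := by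
    have hT0 : ∀ t, HasDerivAt (fun t => a t + d t) 0 t := fun t => by
      have h := (ha t).add (hd t); exact h.congr_deriv (by ring)
    intro t
    have h := const_of_deriv0 hT0 t
    rw [ha0, hd0] at h; rw [h]; norm_num
  -- off-diagonal entries vanish
  have hu : ∀ t, b t + c t = 0 := by
    have h1 : ∀ t, HasDerivAt (fun t => Complex.exp (((t/2 : ℝ)) : ℂ) * (b t + c t)) 0 t := by
      intro t
      have he := expC_hasDerivAt half_hasDerivAt t
      have h := he.mul ((hb t).add (hc t))
      refine h.congr_deriv ?_
      simp only [hsC_def, Pi.add_apply, Pi.sub_apply]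
      push_cast
      ring
    intro t
    have h2 := const_of_deriv0 h1 t
    rw [hb0, hc0] at h2
    simp only [add_zero, mul_zero] at h2
    exact (mul_eq_zero.mp h2).resolve_left (Complex.exp_ne_zero _)
  have hw : ∀ t, b t - c t = 0 := by
    have h1 : ∀ t, HasDerivAt
        (fun t => Complex.exp (((t/2 - Real.cos (2*t) : ℝ)) : ℂ) * (b t - c t)) 0 t := by
      intro t
      have he := expC_hasDerivAt psi_hasDerivAt t
      have h := he.mul ((hb t).sub (hc t))
      refine h.congr_deriv ?_
      simp only [hsC_def, Pi.add_apply, Pi.sub_apply]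
      push_cast
      ring
    intro t
    have h2 := const_of_deriv0 h1 t
    rw [hb0, hc0] at h2
    simp only [sub_zero, mul_zero, sub_self] at h2
    exact (mul_eq_zero.mp h2).resolve_left (Complex.exp_ne_zero _)
  have hbπ : b Real.pi = 0 := by linear_combination (hu Real.pi + hw Real.pi) / 2
  have hcπ : c Real.pi = 0 := by linear_combination (hu Real.pi - hw Real.pi) / 2
  -- the (0,0) entry ODE, solved by integrating factor
  set gR : ℝ → ℝ := fun t => Real.exp (t + 1 - Real.cos (2*t)) with hgR_def
  set G : ℝ → ℂ := fun t => Complex.exp (((t + 1 - Real.cos (2*t) : ℝ)) : ℂ) with hG_def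
  have hGr : ∀ t, G t = ((gR t : ℝ) : ℂ) := fun t => (Complex.ofReal_exp _).symm
  have hG : ∀ t, HasDerivAt G (((1 + 2*Real.sin (2*t) : ℝ) : ℂ) * G t) t := fun t =>
    expC_hasDerivAt phi_hasDerivAt t
  have hF : ∀ t, HasDerivAt (fun t => G t * a t) (G t * sC t) t := by
    intro t
    have hd' : d t = 1 - a t := by linear_combination hT t
    have h2 : HasDerivAt a (sC t * ((1 - a t) - a t) - a t) t := by
      have h := ha t; rwa [hd'] at h
    have h := (hG t).mul h2
    refine h.congr_deriv ?_
    simp only [hsC_def]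
    push_cast
    ring
  have hsin2 : Continuous (fun t : ℝ => Real.sin (2*t)) :=
    Real.continuous_sin.comp (continuous_const.mul continuous_id)
  have hcos2 : Continuous (fun t : ℝ => Real.cos (2*t)) :=
    Real.continuous_cos.comp (continuous_const.mul continuous_id)
  have harg : Continuous (fun t : ℝ => t + 1 - Real.cos (2*t)) :=
    (continuous_id.add continuous_const).sub hcos2
  have hcG : Continuous G :=
    Complex.continuous_exp.comp (Complex.continuous_ofReal.comp harg)
  have hcsC : Continuous sC := Complex.continuous_ofReal.comp hsin2
  have key : ∫ s in (0:ℝ)..Real.pi, G s * sC s = G Real.pi * a Real.pi - G 0 * a 0 :=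
    integral_eq_sub_of_hasDerivAt (fun x _ => hF x)
      ((hcG.mul hcsC).intervalIntegrable _ _)
  set J : ℝ := ∫ s in (0:ℝ)..Real.pi, gR s * Real.sin (2*s) with hJ_def
  have hLHS : ∫ s in (0:ℝ)..Real.pi, G s * sC s = ((J : ℝ) : ℂ) := by
    rw [hJ_def, ← intervalIntegral.integral_ofReal]
    apply integral_congr
    intro s _
    show G s * sC s = ((gR s * Real.sin (2*s) : ℝ) : ℂ)
    rw [hGr]
    simp only [hsC_def]
    push_cast
    ring
  -- second FTC for the real integrating factor
  have hgR' : ∀ t, HasDerivAt gR ((1 + 2*Real.sin (2*t)) * gR t) t := fun t => by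
    simpa [hgR_def, mul_comm] using (phi_hasDerivAt t).exp
  have hcgR : Continuous gR := Real.continuous_exp.comp harg
  have ftc2 : ∫ s in (0:ℝ)..Real.pi, (1 + 2*Real.sin (2*s)) * gR s = gR Real.pi - gR 0 :=
    integral_eq_sub_of_hasDerivAt (fun x _ => hgR' x)
      (((continuous_const.add (continuous_const.mul hsin2)).mul hcgR).intervalIntegrable _ _)
  have hintg : IntervalIntegrable gR MeasureTheory.volume 0 Real.pi :=
    hcgR.intervalIntegrable _ _
  have hintJ : IntervalIntegrable (fun s => gR s * Real.sin (2*s)) MeasureTheory.volume 0 Real.pi :=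
    (hcgR.mul hsin2).intervalIntegrable _ _
  have expand : ∫ s in (0:ℝ)..Real.pi, (1 + 2*Real.sin (2*s)) * gR s
      = (∫ s in (0:ℝ)..Real.pi, gR s) + 2*J := by
    rw [show (fun s => (1 + 2*Real.sin (2*s)) * gR s)
        = fun s => gR s + 2*(gR s * Real.sin (2*s)) from funext fun s => by ring]
    rw [integral_add hintg (hintJ.const_mul 2), integral_const_mul, hJ_def]
  have hIeq : ∫ s in (0:ℝ)..Real.pi, gR s
      = Real.exp 1 * ∫ s in (0:ℝ)..Real.pi, Real.exp (s - Real.cos (2*s)) := by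
    rw [← integral_const_mul]
    apply integral_congr
    intro s _
    show gR s = Real.exp 1 * Real.exp (s - Real.cos (2*s))
    rw [hgR_def, ← Real.exp_add]
    ring_nf
  have hgRπ : gR Real.pi = Real.exp Real.pi := by
    rw [hgR_def]; norm_num [Real.cos_two_pi]
  have hgR0 : gR 0 = 1 := by
    rw [hgR_def]; norm_num
  -- real balance equation
  have hbal : Real.exp Real.pi - 1
      = Real.exp 1 * (∫ s in (0:ℝ)..Real.pi, Real.exp (s - Real.cos (2*s))) + 2*J := by
    rw [← hIeq, ← expand, ftc2, hgRπ, hgR0]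
  have hrealJ : J + 1/2 = Real.exp Real.pi * (1 - kappa13)/2 := by
    rw [kappa13]
    have h5 : Real.exp Real.pi * Real.exp (1 - Real.pi) = Real.exp 1 := by
      rw [← Real.exp_add]; ring_nf
    linear_combination (-1/2 : ℝ) * hbal + ((∫ s in (0:ℝ)..Real.pi, Real.exp (s - Real.cos (2*s)))/2) * h5
  -- compute G values
  have hGπ : G Real.pi = ((Real.exp Real.pi : ℝ) : ℂ) := by rw [hGr, hgRπ]
  have hG0 : G 0 = 1 := by rw [hGr, hgR0]; norm_num
  -- solve for a π
  have haπ : a Real.pi = 2⁻¹ * (1 - (kappa13 : ℂ)) := by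
    have h6 : ((Real.exp Real.pi : ℝ) : ℂ) * a Real.pi - 2⁻¹ = ((J : ℝ) : ℂ) := by
      rw [← hLHS, key, hGπ, hG0, ha0]; ring
    have h7 : ((J : ℝ) : ℂ) = ((Real.exp Real.pi : ℝ) : ℂ) * (2⁻¹ * (1 - (kappa13 : ℂ))) - 2⁻¹ := by
      have h7' := congrArg (fun x : ℝ => (x:ℂ)) hrealJ
      push_cast at h7'
      simp only [Complex.ofReal_exp]
      linear_combination h7'
    have hEπ : ((Real.exp Real.pi : ℝ) : ℂ) ≠ 0 := by
      exact_mod_cast (Real.exp_pos Real.pi).ne'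
    apply mul_left_cancel₀ hEπ
    simp only [Complex.ofReal_exp] at h6 h7 ⊢
    linear_combination h6 + h7
  have hdπ : d Real.pi = 2⁻¹ * (1 + (kappa13 : ℂ)) := by
    have := hT Real.pi
    rw [haπ] at this
    linear_combination this
  -- assemble
  refine ⟨?_, kappa13_gt_one, ?_⟩
  · apply Matrix.ext
    intro i j
    fin_cases i <;> fin_cases j
    · show a Real.pi = _
      rw [haπ]
      simp [sigmaZ, Matrix.one_apply]
    · show b Real.pi = _
      rw [hbπ]
      simp [sigmaZ, Matrix.one_apply]
    · show c Real.pi = _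
      rw [hcπ]
      simp [sigmaZ, Matrix.one_apply]
    · show d Real.pi = _
      rw [hdπ]
      simp [sigmaZ, Matrix.one_apply]
  · intro hps
    have hre := hps.re_dotProduct_nonneg (Pi.single 0 1)
    have hM00 : ρ Real.pi 0 0 = a Real.pi := rfl
    rw [show dotProduct (star (Pi.single 0 1)) (ρ Real.pi *ᵥ (Pi.single (0 : Fin 2) (1:ℂ)))
        = ρ Real.pi 0 0 from by
      simp [dotProduct, Matrix.mulVec, Fin.sum_univ_two, Pi.single_apply]] at hre
    rw [hM00, haπ] at hre
    have hκ := kappa13_gt_one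
    have : ((2⁻¹ : ℂ) * (1 - (kappa13:ℂ))).re = (1 - kappa13)/2 := by
      push_cast
      simp [Complex.div_re]
      norm_num [Complex.ofReal_re]
      ring
    rw [show RCLike.re ((2⁻¹ : ℂ) * (1 - (kappa13:ℂ))) = ((2⁻¹ : ℂ) * (1 - (kappa13:ℂ))).re from rfl,
      this] at hre
    linarith
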